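/- Dual basis pairing for f_v: in the setting of the dual A-motive with σ-basis relations (h_{i+1}, h_{i+2})^⊤ = φ_i (h_i, h_{i+1})^⊤ where φ_i = [[0,1],[t-θ,b_i]], and with V = [[a_n,1],[1,0]], X = diag(t-θ, 1), satisfying Θ_n^⊤V = X and Θ_{n-i}^⊤X = Xφ_i for 1 ≤ i ≤ n-1, one has the identity (h_1, h_2)·V^⊤·f_v = v_1 h_n + v_2 h_{n-1} + ⋯ + v_n h_1. -/

import Mathlib

private lemma aux_mulVec_sum {R : Type*} [CommRing R] {ι : Type*} (s : Finset ι)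
    (A : Matrix (Fin 2) (Fin 2) R) (f : ι → Fin 2 → R) :
    A.mulVec (∑ i ∈ s, f i) = ∑ i ∈ s, A.mulVec (f i) := by
  classical
  induction s using Finset.induction_on with
  | empty => simp [Matrix.mulVec_zero]
  | insert _ _ hx ih => simp [Finset.sum_insert hx, Matrix.mulVec_add, ih]

private lemma aux_dot_sum {R : Type*} [CommRing R] {ι : Type*} (s : Finset ι)
    (w : Fin 2 → R) (f : ι → Fin 2 → R) :
    dotProduct w (∑ i ∈ s, f i) = ∑ i ∈ s, dotProduct w (f i) := by
  classical
  induction s using Finset.induction_on with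
  | empty => simp
  | insert _ _ hx ih => simp [Finset.sum_insert hx, dotProduct_add, ih]

/-- dual basis pairing for `f_v`.  With `x` in the role of `t-θ`,
`φ_i = [[0,1],[x,-b_i]]`, `Θ_i = [[0,1],[x,-a_i]]`, `a_i = b_{n-i}` for
`1 ≤ i ≤ n-1`, `V = [[a_n,1],[1,0]]`, `X = diag(x,1)`, the basis relations
`(h_{i+1}, h_{i+2})ᵀ = φ_i (h_i, h_{i+1})ᵀ`, the matrix identities `Θ_nᵀ V = X` and
`Θ_{n-i}ᵀ X = X φ_i`, and `f_v = Σ_{i=1}^n Θ_n⋯Θ_{i+1}(0,v_i)ᵀ`, one has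
`(h_1, h_2)·Vᵀ·f_v = Σ_{i=1}^n v_i h_{n+1-i}`. -/
theorem stmt_16 {R : Type*} [CommRing R] (n : ℕ) (hn : 1 ≤ n)
    (x : R) (a b v h : ℕ → R)
    (hab : ∀ i, 1 ≤ i → i ≤ n - 1 → a i = b (n - i)) :
    let φ : ℕ → Matrix (Fin 2) (Fin 2) R := fun i => !![0, 1; x, -(b i)]
    let Θ : ℕ → Matrix (Fin 2) (Fin 2) R := fun i => !![0, 1; x, -(a i)]
    let V : Matrix (Fin 2) (Fin 2) R := !![a n, 1; 1, 0]
    let Xm : Matrix (Fin 2) (Fin 2) R := !![x, 0; 0, 1]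
    let fv : Fin 2 → R := ∑ i ∈ Finset.Icc 1 n,
      ((((List.range (n - i)).map fun j => Θ (n - j)).prod).mulVec ![(0 : R), v i])
    ∀ (hrec : ∀ i, 1 ≤ i → i ≤ n →
        ![h (i + 1), h (i + 2)] = (φ i).mulVec ![h i, h (i + 1)])
      (hX1 : (Θ n).transpose * V = Xm)
      (hX2 : ∀ i, 1 ≤ i → i ≤ n - 1 → (Θ (n - i)).transpose * Xm = Xm * φ i),
      dotProduct ![h 1, h 2] (V.transpose.mulVec fv) =
        ∑ i ∈ Finset.Icc 1 n, v i * h (n + 1 - i) := by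
  intro φ Θ V Xm fv hrec hX1 hX2
  -- key inductive lemma
  have key : ∀ k, 1 ≤ k → k ≤ n - 1 →
      (((((List.range k).map fun j => Θ (n - j)).prod).transpose * V).mulVec ![h 1, h 2])
        = Xm.mulVec ![h k, h (k + 1)] := by
    intro k
    induction k with
    | zero => omega
    | succ k ih =>
      intro _ hk2
      rcases Nat.eq_zero_or_pos k with hk0 | hkpos
      · subst hk0
        simp [List.range_succ, hX1]
      · have ihk := ih hkpos (by omega)
        rw [List.range_succ]
        simp only [List.map_append, List.prod_append, List.map_cons, List.map_nil,
          List.prod_cons, List.prod_nil, mul_one, Matrix.transpose_mul]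
        rw [Matrix.mul_assoc, ← Matrix.mulVec_mulVec, ihk, Matrix.mulVec_mulVec,
          hX2 k hkpos (by omega), ← Matrix.mulVec_mulVec, ← hrec k hkpos (by omega)]
  -- reduce to a term-by-term identity
  have hfv : fv = ∑ i ∈ Finset.Icc 1 n,
      ((((List.range (n - i)).map fun j => Θ (n - j)).prod).mulVec ![(0 : R), v i]) := rfl
  rw [hfv, aux_mulVec_sum, aux_dot_sum]
  refine Finset.sum_congr rfl ?_
  intro i hi
  rw [Finset.mem_Icc] at hi
  -- move matrices across the dot product
  have swap : ∀ (P : Matrix (Fin 2) (Fin 2) R) (u : Fin 2 → R),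
      dotProduct ![h 1, h 2] (V.transpose.mulVec (P.mulVec u))
        = dotProduct ((P.transpose * V).mulVec ![h 1, h 2]) u := by
    intro P u
    rw [Matrix.mulVec_mulVec, Matrix.dotProduct_mulVec, ← Matrix.mulVec_transpose,
      Matrix.transpose_mul, Matrix.transpose_transpose]
  rw [swap]
  rcases Nat.lt_or_ge i n with hin | hin
  · have hkey := key (n - i) (by omega) (by omega)
    rw [hkey]
    have hidx : n - i + 1 = n + 1 - i := by omega
    rw [hidx]
    simp [Matrix.mulVec, dotProduct, Fin.sum_univ_two, Xm]
    ring
  · have hin' : i = n := by omega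
    rw [hin', Nat.sub_self, show n + 1 - n = 1 by omega]
    simp [Matrix.mulVec, dotProduct, Fin.sum_univ_two, V]
    ring
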